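/- (Kadison) Let H be a complex Hilbert space and let A, B be bounded self-adjoint operators on H. If A and B possess a minimum in B^ℝ(H) — that is, a bounded self-adjoint operator C with C ≤ A, C ≤ B, and such that every bounded self-adjoint X with X ≤ A and X ≤ B satisfies X ≤ C — then A ≤ B or B ≤ A. In other words, B^ℝ(H) is an anti-lattice. -/

import Mathlib

section KadisonAux

open scoped InnerProductSpace ComplexConjugate
open ContinuousLinearMap

set_option linter.unusedSectionVars false
variable {H : Type*} [NormedAddCommGroup H] [InnerProductSpace ℂ H] [CompleteSpace H]

noncomputable def rk (u v : H) : H →L[ℂ] H := (innerSL ℂ v).smulRight u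

@[simp] lemma rk_apply (u v x : H) : rk u v x = ⟪v, x⟫_ℂ • u := rfl

lemma rk_adjoint (u v : H) : adjoint (rk u v) = rk v u := by
  symm
  rw [ContinuousLinearMap.eq_adjoint_iff (rk v u) (rk u v)]
  intro x y
  simp [inner_smul_left, inner_smul_right, inner_conj_symm, mul_comm]

@[simp] lemma rk_star (u v : H) : star (rk u v) = rk v u := by
  rw [star_eq_adjoint, rk_adjoint]

lemma rk_self_sa (u : H) : IsSelfAdjoint (rk u u) := by
  rw [IsSelfAdjoint, rk_star]

lemma rk_pair_sa (u v : H) : IsSelfAdjoint (rk u v + rk v u) := by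
  rw [IsSelfAdjoint, star_add, rk_star, rk_star, add_comm]

lemma ofReal_smul_sa {α : ℝ} {T : H →L[ℂ] H} (hT : IsSelfAdjoint T) :
    IsSelfAdjoint ((α : ℂ) • T) := by
  rw [IsSelfAdjoint, star_smul, hT.star_eq, Complex.star_def, Complex.conj_ofReal]

lemma rk_smul_pos {α : ℝ} (hα : 0 ≤ α) (u : H) : ((α:ℂ) • rk u u).IsPositive := by
  refine ⟨isSelfAdjoint_iff_isSymmetric.mp (ofReal_smul_sa (rk_self_sa u)), fun x => ?_⟩
  have h1 : ⟪((α:ℂ) • rk u u) x, x⟫_ℂ = (α:ℂ) * (Complex.normSq ⟪u, x⟫_ℂ : ℂ) := by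
    rw [ContinuousLinearMap.smul_apply, rk_apply, inner_smul_left, inner_smul_left,
      Complex.conj_ofReal, Complex.normSq_eq_conj_mul_self]
  have h2 : ((α:ℂ) • rk u u).reApplyInnerSelf x = α * Complex.normSq ⟪u, x⟫_ℂ := by
    rw [reApplyInnerSelf, h1, ← Complex.ofReal_mul]
    simp [RCLike.re_to_complex]
  rw [h2]
  exact mul_nonneg hα (Complex.normSq_nonneg _)

/-- scalar AM-GM style quadratic lemma -/
lemma quad {p q c x y : ℝ} (hp : 0 ≤ p) (hq : 0 ≤ q) (hpq : c^2 ≤ p*q)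
    (hx : 0 ≤ x) (hy : 0 ≤ y) : 2*c*(x*y) ≤ p*x^2 + q*y^2 := by
  have hc : c ≤ Real.sqrt p * Real.sqrt q := by
    calc c ≤ |c| := le_abs_self c
    _ = Real.sqrt (c^2) := (Real.sqrt_sq_eq_abs c).symm
    _ ≤ Real.sqrt (p*q) := Real.sqrt_le_sqrt hpq
    _ = Real.sqrt p * Real.sqrt q := Real.sqrt_mul hp q
  have h3 : 2*(Real.sqrt p*x)*(Real.sqrt q*y) ≤ (Real.sqrt p*x)^2 + (Real.sqrt q*y)^2 :=
    two_mul_le_add_sq _ _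
  have hp' : (Real.sqrt p)^2 = p := Real.sq_sqrt hp
  have hq' : (Real.sqrt q)^2 = q := Real.sq_sqrt hq
  nlinarith [mul_nonneg hx hy, mul_nonneg (Real.sqrt_nonneg p) (Real.sqrt_nonneg q)]

lemma realineq {s t r x1 y1 : ℝ} (hs : 0 ≤ s) (ht : 0 ≤ t) (hst : s^2+t^2 = 1)
    (hx : 0 ≤ x1) (hy : 0 ≤ y1) (hr : |r| ≤ x1*y1) :
    0 ≤ (1+s^2)*x1^2 + (1+t^2)*y1^2 + 2*(s*t - Real.sqrt 2)*r := by
  set w := Real.sqrt 2 with hw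
  have hw2 : w^2 = 2 := Real.sq_sqrt (by norm_num)
  have hw0 : 0 ≤ w := Real.sqrt_nonneg 2
  have hw1 : 1 ≤ w := by nlinarith
  have hstw : s*t - w ≤ 0 := by nlinarith [sq_nonneg (s-t)]
  have h1 : 2*(s*t - w)*(x1*y1) ≤ 2*(s*t - w)*r := by
    have hr2 : r ≤ x1*y1 := (abs_le.mp hr).2
    nlinarith
  have h2 : 2*(w - s*t)*(x1*y1) ≤ (1+s^2)*x1^2 + (1+t^2)*y1^2 := by
    apply quad (by positivity) (by positivity) ?_ hx hy
    nlinarith [mul_nonneg (mul_nonneg hw0 hs) ht]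
  linarith

/-- Cauchy-Schwarz for positive operators. -/
lemma op_cs {T : H →L[ℂ] H} (hT : T.IsPositive) (x y : H) :
    ‖⟪T x, y⟫_ℂ‖^2 ≤ RCLike.re ⟪T x, x⟫_ℂ * RCLike.re ⟪T y, y⟫_ℂ := by
  have hsymm : ∀ a b : H, ⟪T a, b⟫_ℂ = ⟪a, T b⟫_ℂ :=
    (isSelfAdjoint_iff_isSymmetric.mp hT.isSelfAdjoint)
  let c : PreInnerProductSpace.Core ℂ H :=
    { inner := fun v w => ⟪v, T w⟫_ℂ
      conj_inner_symm := fun a b => by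
        simp only [← hsymm, inner_conj_symm]
      re_inner_nonneg := fun a => hT.re_inner_nonneg_right a
      add_left := fun a b z => inner_add_left _ _ _
      smul_left := fun a b r => inner_smul_left _ _ _ }
  have h := @InnerProductSpace.Core.inner_mul_inner_self_le ℂ H _ _ _ c x y
  have e1 : (@inner ℂ H (InnerProductSpace.Core.toPreInner' (c := c)) x y) = ⟪x, T y⟫_ℂ := rfl
  have e2 : (@inner ℂ H (InnerProductSpace.Core.toPreInner' (c := c)) y x) = ⟪y, T x⟫_ℂ := rfl
  have e3 : (@inner ℂ H (InnerProductSpace.Core.toPreInner' (c := c)) x x) = ⟪x, T x⟫_ℂ := rfl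
  have e4 : (@inner ℂ H (InnerProductSpace.Core.toPreInner' (c := c)) y y) = ⟪y, T y⟫_ℂ := rfl
  rw [e1, e2, e3, e4] at h
  have n1 : ‖⟪x, T y⟫_ℂ‖ = ‖⟪T x, y⟫_ℂ‖ := by rw [hsymm]
  have n2 : ‖⟪y, T x⟫_ℂ‖ = ‖⟪T x, y⟫_ℂ‖ := norm_inner_symm _ _
  have r1 : RCLike.re ⟪x, T x⟫_ℂ = RCLike.re ⟪T x, x⟫_ℂ := inner_re_symm _ _
  have r2 : RCLike.re ⟪y, T y⟫_ℂ = RCLike.re ⟪T y, y⟫_ℂ := inner_re_symm _ _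
  rw [n1, n2, r1, r2] at h
  calc ‖⟪T x, y⟫_ℂ‖^2 = ‖⟪T x, y⟫_ℂ‖ * ‖⟪T x, y⟫_ℂ‖ := sq _
  _ ≤ _ := h

lemma rk_form (c : ℝ) (u x : H) :
    RCLike.re ⟪((c:ℂ) • rk u u) x, x⟫_ℂ = c * Complex.normSq ⟪u, x⟫_ℂ := by
  have h1 : ⟪((c:ℂ) • rk u u) x, x⟫_ℂ = (c:ℂ) * (Complex.normSq ⟪u, x⟫_ℂ : ℂ) := by
    rw [ContinuousLinearMap.smul_apply, rk_apply, inner_smul_left, inner_smul_left,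
      Complex.conj_ofReal, Complex.normSq_eq_conj_mul_self]
  rw [h1, ← Complex.ofReal_mul]
  simp [RCLike.re_to_complex]

lemma rk_real_smul (r : ℝ) (u : H) :
    rk ((r:ℝ) • u) ((r:ℝ) • u) = ((r^2 : ℝ) : ℂ) • rk u u := by
  ext x
  rw [show (r • u) = ((r:ℂ) • u) from (Complex.coe_smul r u).symm]
  rw [rk_apply, ContinuousLinearMap.smul_apply, rk_apply, inner_smul_left, Complex.conj_ofReal]
  rw [smul_smul, smul_smul]
  congr 1
  push_cast
  ring

/-- peeling a rank-one off a positive operator -/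
lemma rank_step {T : H →L[ℂ] H} (hT : T.IsPositive) {ψ : H}
    (hψ : 0 < RCLike.re ⟪T ψ, ψ⟫_ℂ) :
    ∃ (e : H) (α : ℝ), ‖e‖ = 1 ∧ 0 < α ∧ (T - (α:ℂ) • rk e e).IsPositive := by
  set lam := RCLike.re ⟪T ψ, ψ⟫_ℂ with hlam
  have hu : T ψ ≠ 0 := by
    intro h0
    apply absurd hψ
    rw [hlam, h0]
    simp
  have hnu : (0:ℝ) < ‖T ψ‖ := norm_pos_iff.mpr hu
  refine ⟨(‖T ψ‖⁻¹ : ℝ) • T ψ, ‖T ψ‖^2 / lam, ?_, by positivity, ?_⟩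
  · rw [norm_smul]
    simp [abs_of_pos (inv_pos.mpr hnu), inv_mul_cancel₀ (ne_of_gt hnu)]
  · have hrw : ((‖T ψ‖^2 / lam : ℝ) : ℂ) • rk ((‖T ψ‖⁻¹ : ℝ) • T ψ) ((‖T ψ‖⁻¹ : ℝ) • T ψ)
        = ((lam⁻¹ : ℝ) : ℂ) • rk (T ψ) (T ψ) := by
      rw [rk_real_smul, smul_smul, ← Complex.ofReal_mul]
      congr 2
      field_simp
    rw [hrw]
    constructor
    · exact isSelfAdjoint_iff_isSymmetric.mp (hT.isSelfAdjoint.sub (ofReal_smul_sa (rk_self_sa _)))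
    · intro x
      rw [reApplyInnerSelf, ContinuousLinearMap.sub_apply, inner_sub_left, map_sub, rk_form]
      have hcs : Complex.normSq ⟪T ψ, x⟫_ℂ ≤ lam * RCLike.re ⟪T x, x⟫_ℂ := by
        have h := op_cs hT ψ x
        rw [Complex.normSq_eq_norm_sq]
        exact h
      have h2 := mul_le_mul_of_nonneg_left hcs (inv_nonneg.mpr hψ.le)
      rw [← mul_assoc, inv_mul_cancel₀ (ne_of_gt hψ), one_mul] at h2
      linarith

set_option maxHeartbeats 2000000 in
lemma pos2 {e g : H} {ν s t : ℝ} (hν : 0 ≤ ν) (hs : 0 ≤ s) (ht : 0 ≤ t) (hst : s^2+t^2 = 1) :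
    ((ν:ℂ) • rk ((s:ℂ)•e + (t:ℂ)•g) ((s:ℂ)•e + (t:ℂ)•g)
      - ((ν*Real.sqrt 2 : ℝ):ℂ) • (rk e g + rk g e)
      + (ν:ℂ) • (rk e e + rk g g)).IsPositive := by
  constructor
  · exact isSelfAdjoint_iff_isSymmetric.mp (((ofReal_smul_sa (rk_self_sa _)).sub (ofReal_smul_sa (rk_pair_sa _ _))).add
      (ofReal_smul_sa ((rk_self_sa e).add (rk_self_sa g))))
  · intro x
    rw [reApplyInnerSelf]
    set a := ⟪e,x⟫_ℂ with ha
    set b := ⟪g,x⟫_ℂ with hb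
    have hr : |(starRingEnd ℂ a * b).re| ≤ ‖a‖ * ‖b‖ := by
      calc |(starRingEnd ℂ a * b).re| ≤ ‖starRingEnd ℂ a * b‖ :=
            Complex.abs_re_le_norm _
      _ = ‖a‖ * ‖b‖ := by rw [norm_mul, Complex.norm_conj]
    have hre : RCLike.re ⟪((ν:ℂ) • rk ((s:ℂ)•e + (t:ℂ)•g) ((s:ℂ)•e + (t:ℂ)•g)
          - ((ν*Real.sqrt 2 : ℝ):ℂ) • (rk e g + rk g e)
          + (ν:ℂ) • (rk e e + rk g g)) x, x⟫_ℂ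
        = ν * ((1+s^2)*‖a‖^2 + (1+t^2)*‖b‖^2
            + 2*(s*t - Real.sqrt 2)*((starRingEnd ℂ a * b).re)) := by
      simp only [ContinuousLinearMap.add_apply, ContinuousLinearMap.sub_apply,
        ContinuousLinearMap.smul_apply, rk_apply, inner_add_left, inner_smul_left,
        inner_sub_left, smul_add, smul_smul, map_mul, map_add, Complex.conj_ofReal,
        ← ha, ← hb]
      rw [RCLike.re_to_complex]
      rw [Complex.sq_norm, Complex.sq_norm]
      simp only [RCLike.re_to_complex, Complex.add_re, Complex.sub_re, Complex.mul_re,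
        Complex.mul_im, Complex.add_im, Complex.sub_im, Complex.ofReal_re, Complex.ofReal_im,
        Complex.conj_re, Complex.conj_im, Complex.normSq_apply]
      ring
    rw [hre]
    exact mul_nonneg hν (realineq hs ht hst (norm_nonneg a) (norm_nonneg b) hr)

lemma rk_unit_smul {c : ℂ} (hc : ‖c‖ = 1) (f : H) : rk (c • f) (c • f) = rk f f := by
  ext x
  rw [rk_apply, rk_apply, inner_smul_left, smul_smul]
  rw [show (starRingEnd ℂ) c * ⟪f, x⟫_ℂ * c = ((starRingEnd ℂ) c * c) * ⟪f, x⟫_ℂ from by ring,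
    ← Complex.normSq_eq_conj_mul_self, Complex.normSq_eq_norm_sq, hc]
  norm_num

lemma key {e f : H} (he : ‖e‖ = 1) (hf : ‖f‖ = 1) {ν : ℝ} (hν : 0 < ν) :
    ∃ X : H →L[ℂ] H, IsSelfAdjoint X ∧ ((ν:ℂ) • rk e e - X).IsPositive ∧
      ((ν:ℂ) • rk f f - X).IsPositive ∧ ∃ w : H, 0 < RCLike.re ⟪X w, w⟫_ℂ := by
  have he0 : e ≠ 0 := by intro h; rw [h] at he; simp at he
  have hf0 : f ≠ 0 := by intro h; rw [h] at hf; simp at hf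
  have hee' : ⟪e, e⟫_ℂ = 1 := by
    rw [inner_self_eq_norm_sq_to_K, he]; norm_num
  set s' : ℂ := ⟪e, f⟫_ℂ with hs'
  set s : ℝ := ‖s'‖ with hsdef
  have hs0 : 0 ≤ s := norm_nonneg _
  have hsle : s ≤ 1 := by
    have := norm_inner_le_norm (𝕜 := ℂ) e f
    rw [he, hf] at this
    simpa [hsdef, hs'] using this
  by_cases hdep : s = 1
  · -- f is a unit multiple of e
    have hCS : ‖⟪e, f⟫_ℂ‖ = ‖e‖ * ‖f‖ := by
      rw [he, hf, ← hs', ← hsdef, hdep]; norm_num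
    obtain ⟨r, hr0, hfre⟩ := (norm_inner_eq_norm_iff he0 hf0).mp hCS
    have habsr : ‖r‖ = 1 := by
      have : ‖f‖ = ‖r‖ * ‖e‖ := by
        rw [hfre, norm_smul]
      rw [hf, he, mul_one] at this
      exact this.symm
    have hrkff : rk f f = rk e e := by rw [hfre, rk_unit_smul habsr]
    refine ⟨(ν:ℂ) • rk e e, ofReal_smul_sa (rk_self_sa e), ?_, ?_, ⟨e, ?_⟩⟩
    · rw [sub_self]; exact isPositive_zero
    · rw [hrkff, sub_self]; exact isPositive_zero
    · rw [rk_form, hee']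
      simpa using hν
  · have hslt : s < 1 := lt_of_le_of_ne hsle hdep
    set t : ℝ := Real.sqrt (1 - s^2) with htdef
    have ht2 : t^2 = 1 - s^2 := Real.sq_sqrt (by nlinarith)
    have ht : 0 < t := Real.sqrt_pos.mpr (by nlinarith)
    have hst : s^2 + t^2 = 1 := by rw [ht2]; ring
    set c : ℂ := if s' = 0 then 1 else (starRingEnd ℂ) s' / (s:ℂ) with hcdef
    have habsc : ‖c‖ = 1 := by
      rcases eq_or_ne s' 0 with h0 | h0
      · rw [hcdef, if_pos h0]; simp
      · rw [hcdef, if_neg h0, norm_div, Complex.norm_conj, Complex.norm_real, Real.norm_eq_abs,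
          abs_of_nonneg hs0, ← hsdef, div_self]
        intro hc
        exact h0 (norm_eq_zero.mp hc)
    have hcs' : c * ⟪e, f⟫_ℂ = (s:ℂ) := by
      rcases eq_or_ne s' 0 with h0 | h0
      · rw [hcdef, if_pos h0, one_mul, ← hs', h0, hsdef, h0]
        simp
      · have hspos : (0:ℝ) < s := by rw [hsdef]; exact norm_pos_iff.mpr h0
        rw [hcdef, if_neg h0, ← hs', div_mul_eq_mul_div,
          ← Complex.normSq_eq_conj_mul_self, Complex.normSq_eq_norm_sq, ← hsdef]
        rw [show ((s^2 : ℝ) : ℂ) / (s:ℂ) = ((s^2/s : ℝ) : ℂ) by push_cast; ring]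
        rw [sq, mul_div_assoc, div_self hspos.ne', mul_one]
    obtain ⟨f₁, hf₁def⟩ : ∃ y : H, y = c • f := ⟨_, rfl⟩
    have hef₁ : ⟪e, f₁⟫_ℂ = (s:ℂ) := by rw [hf₁def, inner_smul_right, hcs']
    have hf₁f₁ : ⟪f₁, f₁⟫_ℂ = 1 := by
      rw [hf₁def, inner_smul_left, inner_smul_right, ← mul_assoc,
        ← Complex.normSq_eq_conj_mul_self, Complex.normSq_eq_norm_sq, habsc,
        inner_self_eq_norm_sq_to_K, hf]
      norm_num
    have hf₁e : ⟪f₁, e⟫_ℂ = (s:ℂ) := by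
      rw [← inner_conj_symm, hef₁, Complex.conj_ofReal]
    obtain ⟨g, hgdef⟩ : ∃ y : H, y = ((t⁻¹:ℝ):ℂ) • (f₁ - (s:ℂ) • e) := ⟨_, rfl⟩
    have heg : ⟪e, g⟫_ℂ = 0 := by
      rw [hgdef, inner_smul_right, inner_sub_right, inner_smul_right, hee',
        mul_one, hef₁, sub_self, mul_zero]
    have hge : ⟪g, e⟫_ℂ = 0 := by rw [← inner_conj_symm, heg, map_zero]
    have hgg : ⟪g, g⟫_ℂ = 1 := by
      have hx : ⟪f₁ - (s:ℂ) • e, f₁ - (s:ℂ) • e⟫_ℂ = ((1 - s^2 : ℝ):ℂ) := by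
        simp only [inner_sub_left, inner_sub_right, inner_smul_left, inner_smul_right,
          hf₁f₁, hef₁, hf₁e, hee', Complex.conj_ofReal]
        push_cast
        ring
      rw [hgdef, inner_smul_left, inner_smul_right, Complex.conj_ofReal, hx]
      rw [show ((t⁻¹:ℝ):ℂ) * (((t⁻¹:ℝ):ℂ) * ((1 - s^2 : ℝ):ℂ)) = (((t⁻¹ * t⁻¹ * (1-s^2) : ℝ)):ℂ)
        by push_cast; ring]
      rw [← ht2]
      rw [show t⁻¹ * t⁻¹ * t^2 = 1 by
        have htne := ht.ne'
        field_simp]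
      norm_num
    have hfdecomp : (s:ℂ) • e + (t:ℂ) • g = f₁ := by
      rw [hgdef, smul_smul]
      rw [show ((t:ℂ) * ((t⁻¹:ℝ):ℂ)) = 1 by
        push_cast
        exact mul_inv_cancel₀ (Complex.ofReal_ne_zero.mpr ht.ne')]
      rw [one_smul]
      abel
    have hrkff₁ : rk f f = rk f₁ f₁ := by rw [hf₁def, rk_unit_smul habsc]
    refine ⟨((ν*Real.sqrt 2:ℝ):ℂ) • (rk e g + rk g e) - (ν:ℂ) • (rk e e + rk g g),
      (ofReal_smul_sa (rk_pair_sa e g)).sub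
        (ofReal_smul_sa ((rk_self_sa e).add (rk_self_sa g))), ?_, ?_, ⟨e + g, ?_⟩⟩
    · have h := pos2 (e:=e) (g:=g) (ν:=ν) (s:=1) (t:=0) hν.le zero_le_one le_rfl (by norm_num)
      simp only [Complex.ofReal_one, Complex.ofReal_zero, one_smul, zero_smul, add_zero] at h
      convert h using 1
      abel
    · have h := pos2 (e:=e) (g:=g) (ν:=ν) (s:=s) (t:=t) hν.le hs0 ht.le hst
      rw [hfdecomp, ← hrkff₁] at h
      convert h using 1
      abel
    · have hXw : (((ν*Real.sqrt 2:ℝ):ℂ) • (rk e g + rk g e) - (ν:ℂ) • (rk e e + rk g g)) (e + g)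
          = (((ν*Real.sqrt 2 - ν : ℝ)):ℂ) • (e + g) := by
        simp only [ContinuousLinearMap.sub_apply, ContinuousLinearMap.add_apply,
          ContinuousLinearMap.smul_apply, rk_apply, inner_add_right, hee', hgg, heg, hge]
        push_cast
        module
      rw [hXw, inner_smul_left, Complex.conj_ofReal]
      have h2 : ⟪e + g, e + g⟫_ℂ = 2 := by
        rw [inner_add_add_self, hee', hgg, heg, hge]
        norm_num
      rw [h2]
      rw [show ((ν*Real.sqrt 2 - ν : ℝ):ℂ) * 2 = (((ν*Real.sqrt 2 - ν)*2 : ℝ):ℂ) by push_cast; ring]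
      simp only [RCLike.re_to_complex, Complex.ofReal_re]
      have hs2 : 1 < Real.sqrt 2 := by
        nlinarith [Real.sq_sqrt (show (0:ℝ) ≤ 2 by norm_num), Real.sqrt_nonneg 2]
      nlinarith

theorem stmt4' (A B C : H →L[ℂ] H)
    (hA : IsSelfAdjoint A) (hB : IsSelfAdjoint B) (hC : IsSelfAdjoint C)
    (hCA : (A - C).IsPositive) (hCB : (B - C).IsPositive)
    (hmin : ∀ X : H →L[ℂ] H, IsSelfAdjoint X →
      (A - X).IsPositive → (B - X).IsPositive → (C - X).IsPositive) :
    (B - A).IsPositive ∨ (A - B).IsPositive := by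
  by_contra hcon
  push_neg at hcon
  obtain ⟨h1, h2⟩ := hcon
  have hBA : IsSelfAdjoint (B - A) := hB.sub hA
  have hAB : IsSelfAdjoint (A - B) := hA.sub hB
  obtain ⟨ψ, hψ⟩ : ∃ ψ, (B - A).reApplyInnerSelf ψ < 0 := by
    by_contra hno
    push_neg at hno
    exact h1 ⟨isSelfAdjoint_iff_isSymmetric.mp hBA, hno⟩
  obtain ⟨φ, hφ⟩ : ∃ φ, (A - B).reApplyInnerSelf φ < 0 := by
    by_contra hno
    push_neg at hno
    exact h2 ⟨isSelfAdjoint_iff_isSymmetric.mp hAB, hno⟩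
  rw [reApplyInnerSelf] at hψ hφ
  have hψA : 0 < RCLike.re ⟪(A - C) ψ, ψ⟫_ℂ := by
    have hsplit : RCLike.re ⟪(A - C) ψ, ψ⟫_ℂ
        = RCLike.re ⟪(B - C) ψ, ψ⟫_ℂ - RCLike.re ⟪(B - A) ψ, ψ⟫_ℂ := by
      simp only [ContinuousLinearMap.sub_apply, inner_sub_left, map_sub]
      ring
    have hnn := hCB.re_inner_nonneg_left ψ
    rw [hsplit]
    linarith
  have hφB : 0 < RCLike.re ⟪(B - C) φ, φ⟫_ℂ := by
    have hsplit : RCLike.re ⟪(B - C) φ, φ⟫_ℂ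
        = RCLike.re ⟪(A - C) φ, φ⟫_ℂ - RCLike.re ⟪(A - B) φ, φ⟫_ℂ := by
      simp only [ContinuousLinearMap.sub_apply, inner_sub_left, map_sub]
      ring
    have hnn := hCA.re_inner_nonneg_left φ
    rw [hsplit]
    linarith
  obtain ⟨e, α, hel, hα, hposA⟩ := rank_step hCA hψA
  obtain ⟨f, β, hfl, hβ, hposB⟩ := rank_step hCB hφB
  have hν0 : 0 < min α β := lt_min hα hβ
  obtain ⟨X, hXsa, hXe, hXf, w, hw⟩ := key hel hfl hν0
  have hAx : (A - (X + C)).IsPositive := by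
    have hsum := (hposA.add (rk_smul_pos (sub_nonneg.mpr (min_le_left α β)) e)).add hXe
    have heq : ((A - C) - (α:ℂ) • rk e e) + (((α - min α β : ℝ)):ℂ) • rk e e
        + (((min α β : ℝ):ℂ) • rk e e - X) = A - (X + C) := by
      rw [Complex.ofReal_sub, sub_smul]
      abel
    rw [heq] at hsum
    exact hsum
  have hBx : (B - (X + C)).IsPositive := by
    have hsum := (hposB.add (rk_smul_pos (sub_nonneg.mpr (min_le_right α β)) f)).add hXf
    have heq : ((B - C) - (β:ℂ) • rk f f) + (((β - min α β : ℝ)):ℂ) • rk f f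
        + (((min α β : ℝ):ℂ) • rk f f - X) = B - (X + C) := by
      rw [Complex.ofReal_sub, sub_smul]
      abel
    rw [heq] at hsum
    exact hsum
  have hCx := hmin (X + C) (hXsa.add hC) hAx hBx
  rw [show C - (X + C) = -X from by abel] at hCx
  have hfin := hCx.re_inner_nonneg_left w
  rw [ContinuousLinearMap.neg_apply, inner_neg_left, map_neg] at hfin
  linarith

end KadisonAux

/-- **Kadison.** The bounded self-adjoint operators on a complex Hilbert
space form an anti-lattice: if `A` and `B` possess a minimum `C` (w.r.t. the order
induced by the cone of positive operators), then `A ≤ B` or `B ≤ A`. -/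
theorem stmt4 (H : Type*) [NormedAddCommGroup H] [InnerProductSpace ℂ H] [CompleteSpace H]
    (A B C : H →L[ℂ] H)
    (hA : IsSelfAdjoint A) (hB : IsSelfAdjoint B) (hC : IsSelfAdjoint C)
    (hCA : (A - C).IsPositive) (hCB : (B - C).IsPositive)
    (hmin : ∀ X : H →L[ℂ] H, IsSelfAdjoint X →
      (A - X).IsPositive → (B - X).IsPositive → (C - X).IsPositive) :
    (B - A).IsPositive ∨ (A - B).IsPositive := by
  exact stmt4' A B C hA hB hC hCA hCB hmin
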